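/- Set k = 5, h = 3. For z = (x,y) ∈ ℝ^5 × ℝ^3 write u = 2|x|^2, v = 4|y|^2, and let f(x,y) = (u − v)u^{3/4}/4 and g = ∇f/|∇f|. Then at every point z = (x,y) with u > v, div g(z) ≥ (2√2/343) · (√u − √v)/|z|^2. -/

import Mathlib

open MeasureTheory
open scoped RealInnerProductSpace ENNReal

noncomputable section

/-- Euclidean norm of the first (`ℝ^k`) component of `z = (x, y)`. -/
def nX (k h : ℕ) (z : EuclideanSpace ℝ (Fin (k + h))) : ℝ :=
  Real.sqrt (∑ i : Fin k, (z (Fin.castAdd h i)) ^ 2)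

/-- Euclidean norm of the second (`ℝ^h`) component of `z = (x, y)`. -/
def nY (k h : ℕ) (z : EuclideanSpace ℝ (Fin (k + h))) : ℝ :=
  Real.sqrt (∑ j : Fin h, (z (Fin.natAdd k j)) ^ 2)

/-- The Lawson cone `M_{kh}`. -/
def Mset (k h : ℕ) : Set (EuclideanSpace ℝ (Fin (k + h))) :=
  {z | nX k h z / Real.sqrt ((k : ℝ) - 1) = nY k h z / Real.sqrt ((h : ℝ) - 1)}

/-- The open region `K_{kh}` bounded by the Lawson cone. -/
def Kset (k h : ℕ) : Set (EuclideanSpace ℝ (Fin (k + h))) :=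
  {z | nX k h z / Real.sqrt ((k : ℝ) - 1) < nY k h z / Real.sqrt ((h : ℝ) - 1)}

/-- The cylinder `H_R = B_R^k × B_R^h`. -/
def Hset (k h : ℕ) (R : ℝ) : Set (EuclideanSpace ℝ (Fin (k + h))) :=
  {z | nX k h z < R ∧ nY k h z < R}

/-- The exceptional set `S` of pairs. -/
def S : Set (ℕ × ℕ) := {(3, 5), (2, 7), (2, 8), (2, 9), (2, 10), (2, 11)}

/-- Divergence of a vector field, as the trace of its derivative
(equivalently `∑ i, ∂ᵢ gᵢ`). -/
def divg {n : ℕ} (g : EuclideanSpace ℝ (Fin n) → EuclideanSpace ℝ (Fin n))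
    (z : EuclideanSpace ℝ (Fin n)) : ℝ :=
  LinearMap.trace ℝ _ (fderiv ℝ g z).toLinearMap

/-- `u = (h-1)|x|^2 = 2|x|^2` (here `(h,k) = (3,5)`). -/
def uu (z : EuclideanSpace ℝ (Fin (5 + 3))) : ℝ := 2 * nX 5 3 z ^ 2

/-- `v = (k-1)|y|^2 = 4|y|^2`. -/
def vv (z : EuclideanSpace ℝ (Fin (5 + 3))) : ℝ := 4 * nY 5 3 z ^ 2

/-- `f₊(x,y) = (u - v)·u^{3/4}/4`. -/
def fp (z : EuclideanSpace ℝ (Fin (5 + 3))) : ℝ :=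
  (uu z - vv z) * uu z ^ ((3 : ℝ) / 4) / 4

/-- `f₋(x,y) = (u - v)·v^{3/4}/4`. -/
def fm (z : EuclideanSpace ℝ (Fin (5 + 3))) : ℝ :=
  (uu z - vv z) * vv z ^ ((3 : ℝ) / 4) / 4

/-! ### Auxiliary development -/

abbrev E8 := EuclideanSpace ℝ (Fin (5+3))

def Af (w : E8) : ℝ := ∑ i : Fin 5, (w (Fin.castAdd 3 i))^2
def Bf (w : E8) : ℝ := ∑ j : Fin 3, (w (Fin.natAdd 5 j))^2

lemma Af_nonneg (w : E8) : 0 ≤ Af w := Finset.sum_nonneg fun _ _ => sq_nonneg _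
lemma Bf_nonneg (w : E8) : 0 ≤ Bf w := Finset.sum_nonneg fun _ _ => sq_nonneg _

lemma uu_eq (w : E8) : uu w = 2 * Af w := by
  unfold uu nX Af; rw [Real.sq_sqrt (by positivity)]
lemma vv_eq (w : E8) : vv w = 4 * Bf w := by
  unfold vv nY Bf; rw [Real.sq_sqrt (by positivity)]
lemma fp_eq (w : E8) :
    fp w = (2 * Af w - 4 * Bf w) * (2 * Af w) ^ ((3:ℝ)/4) / 4 := by
  rw [fp, uu_eq, vv_eq]

/-! #### linear algebra -/

def Xl : E8 →ₗ[ℝ] E8 where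
  toFun w := WithLp.toLp 2 (fun i : Fin (5+3) => if (i:ℕ) < 5 then w i else 0)
  map_add' w v := by ext i; by_cases h : (i:ℕ) < 5 <;> simp [h, PiLp.add_apply]
  map_smul' c w := by ext i; by_cases h : (i:ℕ) < 5 <;> simp [h, PiLp.smul_apply, smul_eq_mul]

def Yl : E8 →ₗ[ℝ] E8 where
  toFun w := WithLp.toLp 2 (fun i : Fin (5+3) => if (i:ℕ) < 5 then 0 else w i)
  map_add' w v := by ext i; by_cases h : (i:ℕ) < 5 <;> simp [h, PiLp.add_apply]
  map_smul' c w := by ext i; by_cases h : (i:ℕ) < 5 <;> simp [h, PiLp.smul_apply, smul_eq_mul]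

def Xv : E8 →L[ℝ] E8 := Xl.toContinuousLinearMap
def Yv : E8 →L[ℝ] E8 := Yl.toContinuousLinearMap

lemma Xv_apply (w : E8) (i : Fin (5+3)) : Xv w i = if (i:ℕ) < 5 then w i else 0 := rfl
lemma Yv_apply (w : E8) (i : Fin (5+3)) : Yv w i = if (i:ℕ) < 5 then 0 else w i := rfl

def dA (w : E8) : E8 →L[ℝ] ℝ :=
  ∑ i : Fin 5, (2 * w (Fin.castAdd 3 i)) • EuclideanSpace.proj (𝕜 := ℝ) (Fin.castAdd 3 i)
def dB (w : E8) : E8 →L[ℝ] ℝ :=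
  ∑ j : Fin 3, (2 * w (Fin.natAdd 5 j)) • EuclideanSpace.proj (𝕜 := ℝ) (Fin.natAdd 5 j)

theorem hAf (w : E8) : HasFDerivAt Af (dA w) w := by
  unfold Af dA
  exact HasFDerivAt.fun_sum fun i _ => by
    simpa [pow_two, two_mul, add_smul] using
      ((EuclideanSpace.proj (𝕜 := ℝ) (Fin.castAdd (n := 5) 3 i)).hasFDerivAt (x := w)).fun_mul
      ((EuclideanSpace.proj (𝕜 := ℝ) (Fin.castAdd (n := 5) 3 i)).hasFDerivAt (x := w))

theorem hBf (w : E8) : HasFDerivAt Bf (dB w) w := by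
  unfold Bf dB
  exact HasFDerivAt.fun_sum fun j _ => by
    simpa [pow_two, two_mul, add_smul] using
      ((EuclideanSpace.proj (𝕜 := ℝ) (Fin.natAdd (m := 3) 5 j)).hasFDerivAt (x := w)).fun_mul
      ((EuclideanSpace.proj (𝕜 := ℝ) (Fin.natAdd (m := 3) 5 j)).hasFDerivAt (x := w))

lemma dA_apply (w h : E8) :
    dA w h = 2 * ∑ i : Fin 5, w (Fin.castAdd 3 i) * h (Fin.castAdd 3 i) := by
  simp [dA, smul_eq_mul, Finset.mul_sum, mul_assoc]
lemma dB_apply (w h : E8) :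
    dB w h = 2 * ∑ j : Fin 3, w (Fin.natAdd 5 j) * h (Fin.natAdd 5 j) := by
  simp [dB, smul_eq_mul, Finset.mul_sum, mul_assoc]

lemma dA_Xv (w : E8) : dA w (Xv w) = 2 * Af w := by
  rw [dA_apply, Af]; congr 1; apply Finset.sum_congr rfl; intro i _
  rw [Xv_apply, if_pos (by simpa using i.isLt)]; ring
lemma dB_Xv (w : E8) : dB w (Xv w) = 0 := by
  rw [dB_apply]
  have : ∀ j : Fin 3, w (Fin.natAdd 5 j) * Xv w (Fin.natAdd 5 j) = 0 := by
    intro j; rw [Xv_apply, if_neg (by simp)]; ring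
  simp [this]
lemma dA_Yv (w : E8) : dA w (Yv w) = 0 := by
  rw [dA_apply]
  have : ∀ i : Fin 5, w (Fin.castAdd 3 i) * Yv w (Fin.castAdd 3 i) = 0 := by
    intro i; rw [Yv_apply, if_pos (by simpa using i.isLt)]; ring
  simp [this]
lemma dB_Yv (w : E8) : dB w (Yv w) = 2 * Bf w := by
  rw [dB_apply, Bf]; congr 1; apply Finset.sum_congr rfl; intro j _
  rw [Yv_apply, if_neg (by simp)]; ring

lemma trace_eq (L : E8 →L[ℝ] E8) :
    LinearMap.trace ℝ E8 L.toLinearMap = ∑ i : Fin (5+3), L (EuclideanSpace.single i 1) i := by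
  classical
  rw [LinearMap.trace_eq_matrix_trace ℝ (EuclideanSpace.basisFun (Fin (5+3)) ℝ).toBasis]
  simp [Matrix.trace, Matrix.diag, LinearMap.toMatrix_apply, EuclideanSpace.basisFun_apply,
    EuclideanSpace.basisFun_repr]

lemma eval_sum (φ : E8 →L[ℝ] ℝ) (u : E8) :
    ∑ j : Fin (5+3), φ (EuclideanSpace.single j 1) * u j = φ u := by
  have hu := ((EuclideanSpace.basisFun (Fin (5+3)) ℝ).toBasis.sum_repr u)
  simp only [OrthonormalBasis.coe_toBasis_repr_apply, OrthonormalBasis.coe_toBasis,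
    EuclideanSpace.basisFun_repr, EuclideanSpace.basisFun_apply] at hu
  conv_rhs => rw [← hu]
  rw [map_sum]
  simp [mul_comm]

lemma sum_Xv_diag : ∑ i : Fin (5+3), Xv (EuclideanSpace.single i 1) i = 5 := by
  rw [Fin.sum_univ_add (f := fun i => Xv (EuclideanSpace.single i 1) i)]
  have h1 : ∀ i : Fin 5, Xv (EuclideanSpace.single (Fin.castAdd 3 i) 1) (Fin.castAdd 3 i) = 1 := by
    intro i; rw [Xv_apply, if_pos (by simpa using i.isLt)]; simp [EuclideanSpace.single_apply]
  have h2 : ∀ j : Fin 3, Xv (EuclideanSpace.single (Fin.natAdd 5 j) 1) (Fin.natAdd 5 j) = 0 := by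
    intro j; rw [Xv_apply, if_neg (by simp)]
  simp [h1, h2]

lemma sum_Yv_diag : ∑ i : Fin (5+3), Yv (EuclideanSpace.single i 1) i = 3 := by
  rw [Fin.sum_univ_add (f := fun i => Yv (EuclideanSpace.single i 1) i)]
  have h1 : ∀ i : Fin 5, Yv (EuclideanSpace.single (Fin.castAdd 3 i) 1) (Fin.castAdd 3 i) = 0 := by
    intro i; rw [Yv_apply, if_pos (by simpa using i.isLt)]
  have h2 : ∀ j : Fin 3, Yv (EuclideanSpace.single (Fin.natAdd 5 j) 1) (Fin.natAdd 5 j) = 1 := by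
    intro j; rw [Yv_apply, if_neg (by simp)]; simp [EuclideanSpace.single_apply]
  simp [h1, h2]

/-! #### the gradient of `fp` -/

def alf (w : E8) : ℝ :=
  4⁻¹ * (3 * (2 * Af w - 4 * Bf w) * (2 * Af w) ^ ((3:ℝ)/4 - 1) + 4 * (2 * Af w) ^ ((3:ℝ)/4))
def bet (w : E8) : ℝ := -2 * (2 * Af w) ^ ((3:ℝ)/4)

def G (w : E8) : E8 := WithLp.toLp 2 (fun i : Fin (5+3) => (if (i:ℕ) < 5 then alf w else bet w) * w i)

theorem hfp (w : E8) (hA : 0 < Af w) :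
    HasFDerivAt fp ((InnerProductSpace.toDual ℝ E8) (G w)) w := by
  have h2A : (2 * Af w) ≠ 0 := by positivity
  have hm : HasFDerivAt (fun w => 2 * Af w - 4 * Bf w) ((2:ℝ) • dA w - (4:ℝ) • dB w) w :=
    ((hAf w).const_mul 2).sub ((hBf w).const_mul 4)
  have h2 : HasFDerivAt (fun w => 2 * Af w) ((2:ℝ) • dA w) w := (hAf w).const_mul 2
  have hr : HasFDerivAt (fun w => (2 * Af w) ^ ((3:ℝ)/4))
      (((3:ℝ)/4 * (2 * Af w) ^ ((3:ℝ)/4 - 1)) • ((2:ℝ) • dA w)) w :=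
    (Real.hasDerivAt_rpow_const (p := (3:ℝ)/4) (Or.inl h2A)).comp_hasFDerivAt (f := fun w => 2 * Af w) w h2
  have hprod := (hm.fun_mul hr).const_mul ((4:ℝ)⁻¹)
  have : (fun w => (4:ℝ)⁻¹ * ((2 * Af w - 4 * Bf w) * (2 * Af w) ^ ((3:ℝ)/4))) = fp := by
    funext w; rw [fp_eq]; ring
  rw [this] at hprod
  refine hprod.congr_fderiv ?_
  ext h
  simp only [ContinuousLinearMap.coe_smul', Pi.smul_apply, ContinuousLinearMap.add_apply,
    ContinuousLinearMap.coe_sub', Pi.sub_apply, ContinuousLinearMap.smul_apply,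
    InnerProductSpace.toDual_apply_apply, PiLp.inner_apply, RCLike.inner_apply, map_sub,
    starRingEnd_apply, star_trivial, smul_eq_mul]
  rw [Finset.sum_congr rfl fun x _ => mul_comm (h x) (G w x)]
  rw [Fin.sum_univ_add (f := fun i => G w i * h i)]
  have hx : ∀ i : Fin 5, G w (Fin.castAdd 3 i) * h (Fin.castAdd 3 i)
      = alf w * (w (Fin.castAdd 3 i) * h (Fin.castAdd 3 i)) := by
    intro i; simp only [G, PiLp.toLp_apply]
    rw [if_pos (by simpa using i.isLt)]
    ring
  have hy : ∀ j : Fin 3, G w (Fin.natAdd 5 j) * h (Fin.natAdd 5 j)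
      = bet w * (w (Fin.natAdd 5 j) * h (Fin.natAdd 5 j)) := by
    intro j; simp only [G, PiLp.toLp_apply]
    rw [if_neg (by simp)]
    ring
  simp only [hx, hy, ← Finset.mul_sum]
  rw [dA_apply, dB_apply]
  simp only [← Finset.mul_sum]
  unfold alf bet
  ring

def Ef (w : E8) : ℝ := alf w * alf w * Af w + bet w * bet w * Bf w

lemma normG (w : E8) : ‖G w‖ = Real.sqrt (Ef w) := by
  rw [EuclideanSpace.norm_eq]
  congr 1
  rw [Fin.sum_univ_add (f := fun i => ‖G w i‖^2)]
  have hx : ∀ i : Fin 5, ‖G w (Fin.castAdd 3 i)‖^2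
      = alf w * alf w * (w (Fin.castAdd 3 i))^2 := by
    intro i; rw [Real.norm_eq_abs, sq_abs]; simp only [G, PiLp.toLp_apply]
    rw [if_pos (by simpa using i.isLt)]; ring
  have hy : ∀ j : Fin 3, ‖G w (Fin.natAdd 5 j)‖^2
      = bet w * bet w * (w (Fin.natAdd 5 j))^2 := by
    intro j; rw [Real.norm_eq_abs, sq_abs]; simp only [G, PiLp.toLp_apply]
    rw [if_neg (by simp)]; ring
  simp only [hx, hy, ← Finset.mul_sum]
  rw [Ef, Af, Bf]

def sg (w : E8) : ℝ := (Real.sqrt (Ef w))⁻¹ * alf w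
def tg (w : E8) : ℝ := (Real.sqrt (Ef w))⁻¹ * bet w
def gh (w : E8) : E8 := sg w • Xv w + tg w • Yv w

lemma g_eq_gh (w : E8) (hA : 0 < Af w) :
    ‖gradient fp w‖⁻¹ • gradient fp w = gh w := by
  have hgrad : gradient fp w = G w :=
    (hasGradientAt_iff_hasFDerivAt.mpr (hfp w hA)).gradient
  rw [hgrad, normG]
  ext i
  show (Real.sqrt (Ef w))⁻¹ * G w i = _
  have : gh w i = sg w * Xv w i + tg w * Yv w i := rfl
  rw [this, Xv_apply, Yv_apply]
  by_cases h : (i:ℕ) < 5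
  · simp only [G, PiLp.toLp_apply, if_pos h, sg, tg]; ring
  · simp only [G, PiLp.toLp_apply, if_neg h, sg, tg]; ring

/-! #### derivative coefficients -/

def aAc (w : E8) : ℝ :=
  3/2 * (2 * Af w - 4 * Bf w) * ((3:ℝ)/4 - 1) * (2 * Af w) ^ ((3:ℝ)/4 - 1 - 1)
    + 3 * (2 * Af w) ^ ((3:ℝ)/4 - 1)
def aBc (w : E8) : ℝ := -3 * (2 * Af w) ^ ((3:ℝ)/4 - 1)
def bAc (w : E8) : ℝ := -3 * (2 * Af w) ^ ((3:ℝ)/4 - 1)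
def EAc (w : E8) : ℝ := 2 * alf w * aAc w * Af w + alf w * alf w + 2 * bet w * bAc w * Bf w
def EBc (w : E8) : ℝ := 2 * alf w * aBc w * Af w + bet w * bet w

lemma Ef_pos (z : E8) (hA : 0 < Af z) (hab : 4 * Bf z < 2 * Af z) : 0 < Ef z := by
  have h1 : (0:ℝ) < (2 * Af z) ^ ((3:ℝ)/4 - 1) := Real.rpow_pos_of_pos (by linarith) _
  have h2 : (0:ℝ) < (2 * Af z) ^ ((3:ℝ)/4) := Real.rpow_pos_of_pos (by linarith) _
  have half : 0 < alf z := by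
    rw [alf]
    have : 0 < 3 * (2 * Af z - 4 * Bf z) * (2 * Af z) ^ ((3:ℝ)/4 - 1) := by
      apply mul_pos (by linarith) h1
    positivity
  have : 0 < alf z * alf z * Af z := by positivity
  have hb2 : 0 ≤ bet z * bet z * Bf z := by
    apply mul_nonneg (mul_self_nonneg _) (Bf_nonneg z)
  rw [Ef]; linarith

set_option maxHeartbeats 2000000 in
theorem divg_val (z : E8) (hA : 0 < Af z) (hab : 4 * Bf z < 2 * Af z) :
    divg (fun w => ‖gradient fp w‖⁻¹ • gradient fp w) z =
      5 * sg z + 3 * tg z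
      + 2 * Af z * (aAc z / Real.sqrt (Ef z) - alf z * EAc z / (2 * (Real.sqrt (Ef z))^3))
      + 2 * Bf z * (-(bet z * EBc z / (2 * (Real.sqrt (Ef z))^3))) := by
  have hE : 0 < Ef z := Ef_pos z hA hab
  have hN : 0 < Real.sqrt (Ef z) := Real.sqrt_pos.mpr hE
  set N := Real.sqrt (Ef z) with hNdef
  have hN2 : N^2 = Ef z := Real.sq_sqrt hE.le
  have h2A : (2 * Af z) ≠ 0 := by positivity
  -- derivatives of the scalar fields
  have h2 : HasFDerivAt (fun w => 2 * Af w) ((2:ℝ) • dA z) z := (hAf z).const_mul 2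
  have hm : HasFDerivAt (fun w => 2 * Af w - 4 * Bf w) ((2:ℝ) • dA z - (4:ℝ) • dB z) z :=
    ((hAf z).const_mul 2).sub ((hBf z).const_mul 4)
  have hr3 : HasFDerivAt (fun w => (2 * Af w) ^ ((3:ℝ)/4))
      (((3:ℝ)/4 * (2 * Af z) ^ ((3:ℝ)/4 - 1)) • ((2:ℝ) • dA z)) z :=
    (Real.hasDerivAt_rpow_const (p := (3:ℝ)/4) (Or.inl h2A)).comp_hasFDerivAt (f := fun w => 2 * Af w) z h2
  have hr1 : HasFDerivAt (fun w => (2 * Af w) ^ ((3:ℝ)/4 - 1))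
      ((((3:ℝ)/4 - 1) * (2 * Af z) ^ ((3:ℝ)/4 - 1 - 1)) • ((2:ℝ) • dA z)) z :=
    (Real.hasDerivAt_rpow_const (p := (3:ℝ)/4 - 1) (Or.inl h2A)).comp_hasFDerivAt (f := fun w => 2 * Af w) z h2
  have half : HasFDerivAt alf ((aAc z) • dA z + (aBc z) • dB z) z := by
    have := (((hm.fun_mul hr1).const_mul (3:ℝ)).fun_add (hr3.const_mul (4:ℝ))).const_mul ((4:ℝ)⁻¹)
    have heq : (fun w => (4:ℝ)⁻¹ * (3 * ((2 * Af w - 4 * Bf w) * (2 * Af w) ^ ((3:ℝ)/4 - 1))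
        + 4 * (2 * Af w) ^ ((3:ℝ)/4))) = alf := by
      funext w; rw [alf]; ring
    rw [heq] at this
    refine this.congr_fderiv ?_
    ext h
    simp only [ContinuousLinearMap.add_apply, ContinuousLinearMap.smul_apply,
      ContinuousLinearMap.coe_smul', Pi.smul_apply, ContinuousLinearMap.coe_sub', Pi.sub_apply,
      smul_eq_mul, aAc, aBc]
    ring
  have hbet : HasFDerivAt bet ((bAc z) • dA z + (0:ℝ) • dB z) z := by
    have := hr3.const_mul (-2:ℝ)
    have heq : (fun w => (-2:ℝ) * (2 * Af w) ^ ((3:ℝ)/4)) = bet := by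
      funext w; rw [bet]
    rw [heq] at this
    refine this.congr_fderiv ?_
    ext h
    simp only [ContinuousLinearMap.add_apply, ContinuousLinearMap.smul_apply,
      ContinuousLinearMap.coe_smul', Pi.smul_apply, smul_eq_mul, bAc]
    ring
  have hEf : HasFDerivAt Ef ((EAc z) • dA z + (EBc z) • dB z) z := by
    have := ((half.fun_mul half).fun_mul (hAf z)).fun_add ((hbet.fun_mul hbet).fun_mul (hBf z))
    have heq : (fun w => alf w * alf w * Af w + bet w * bet w * Bf w) = Ef := by
      funext w; rw [Ef]
    rw [heq] at this
    refine this.congr_fderiv ?_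
    ext h
    simp only [ContinuousLinearMap.add_apply, ContinuousLinearMap.smul_apply,
      ContinuousLinearMap.coe_smul', Pi.smul_apply, smul_eq_mul, EAc, EBc]
    ring
  have hsqrtEf : HasFDerivAt (fun w => Real.sqrt (Ef w))
      ((1 / (2 * N)) • ((EAc z) • dA z + (EBc z) • dB z)) z :=
    (Real.hasDerivAt_sqrt hE.ne').comp_hasFDerivAt z hEf
  have hNinv : HasFDerivAt (fun w => (Real.sqrt (Ef w))⁻¹)
      ((-(N^2)⁻¹) • ((1 / (2 * N)) • ((EAc z) • dA z + (EBc z) • dB z))) z :=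
    (hasDerivAt_inv hN.ne').comp_hasFDerivAt z hsqrtEf
  have hsg : HasFDerivAt sg
      ((aAc z / N - alf z * EAc z / (2 * N^3)) • dA z
        + (aBc z / N - alf z * EBc z / (2 * N^3)) • dB z) z := by
    have := hNinv.fun_mul half
    have heq : (fun w => (Real.sqrt (Ef w))⁻¹ * alf w) = sg := by
      funext w; rw [sg]
    rw [heq] at this
    refine this.congr_fderiv ?_
    ext h
    simp only [ContinuousLinearMap.add_apply, ContinuousLinearMap.smul_apply,
      ContinuousLinearMap.coe_smul', Pi.smul_apply, smul_eq_mul]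
    field_simp
    ring
  have htg : HasFDerivAt tg
      ((bAc z / N - bet z * EAc z / (2 * N^3)) • dA z
        + (-(bet z * EBc z / (2 * N^3))) • dB z) z := by
    have := hNinv.fun_mul hbet
    have heq : (fun w => (Real.sqrt (Ef w))⁻¹ * bet w) = tg := by
      funext w; rw [tg]
    rw [heq] at this
    refine this.congr_fderiv ?_
    ext h
    simp only [ContinuousLinearMap.add_apply, ContinuousLinearMap.smul_apply,
      ContinuousLinearMap.coe_smul', Pi.smul_apply, smul_eq_mul]
    field_simp
    ring
  -- derivative of gh
  have hgh : HasFDerivAt gh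
      ((sg z • Xv + (((aAc z / N - alf z * EAc z / (2 * N^3)) • dA z
        + (aBc z / N - alf z * EBc z / (2 * N^3)) • dB z)).smulRight (Xv z))
      + (tg z • Yv + (((bAc z / N - bet z * EAc z / (2 * N^3)) • dA z
        + (-(bet z * EBc z / (2 * N^3))) • dB z)).smulRight (Yv z))) z := by
    exact (hsg.smul Xv.hasFDerivAt).add (htg.smul Yv.hasFDerivAt)
  -- eventual equality
  have hopen : ∀ᶠ w in nhds z, 0 < Af w :=
    (hAf z).continuousAt.eventually (eventually_gt_nhds hA)
  have heq : (fun w => ‖gradient fp w‖⁻¹ • gradient fp w) =ᶠ[nhds z] gh :=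
    hopen.mono fun w hw => g_eq_gh w hw
  rw [divg, heq.fderiv_eq, hgh.fderiv, trace_eq]
  -- compute the trace
  set Dsg : E8 →L[ℝ] ℝ := (aAc z / N - alf z * EAc z / (2 * N^3)) • dA z
        + (aBc z / N - alf z * EBc z / (2 * N^3)) • dB z with hDsg
  set Dtg : E8 →L[ℝ] ℝ := (bAc z / N - bet z * EAc z / (2 * N^3)) • dA z
        + (-(bet z * EBc z / (2 * N^3))) • dB z with hDtg
  have hterm : ∀ i : Fin (5+3),
      ((sg z • Xv + Dsg.smulRight (Xv z)) + (tg z • Yv + Dtg.smulRight (Yv z)))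
        (EuclideanSpace.single i 1) i
      = sg z * Xv (EuclideanSpace.single i 1) i + Dsg (EuclideanSpace.single i 1) * Xv z i
        + (tg z * Yv (EuclideanSpace.single i 1) i + Dtg (EuclideanSpace.single i 1) * Yv z i) := by
    intro i
    simp only [ContinuousLinearMap.add_apply, ContinuousLinearMap.smul_apply,
      ContinuousLinearMap.smulRight_apply, PiLp.add_apply, PiLp.smul_apply, smul_eq_mul]
  simp only [hterm]
  rw [Finset.sum_add_distrib, Finset.sum_add_distrib, Finset.sum_add_distrib]
  rw [← Finset.mul_sum, ← Finset.mul_sum, sum_Xv_diag, sum_Yv_diag, eval_sum, eval_sum]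
  have hDsgX : Dsg (Xv z) = (aAc z / N - alf z * EAc z / (2 * N^3)) * (2 * Af z) := by
    rw [hDsg]
    simp only [ContinuousLinearMap.add_apply, ContinuousLinearMap.smul_apply, smul_eq_mul]
    rw [dA_Xv, dB_Xv]; ring
  have hDtgY : Dtg (Yv z) = (-(bet z * EBc z / (2 * N^3))) * (2 * Bf z) := by
    rw [hDtg]
    simp only [ContinuousLinearMap.add_apply, ContinuousLinearMap.smul_apply, smul_eq_mul]
    rw [dA_Yv, dB_Yv]; ring
  rw [hDsgX, hDtgY]
  ring


set_option maxHeartbeats 4000000 in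
lemma endgame (a b c s N α β aA aB bA EA EB : ℝ)
    (hb : 0 ≤ b) (hab : 2*b < a) (hc : 0 < c) (hc4 : c^4 = 2*a)
    (hs : 0 ≤ s) (hs2 : s^2 = b)
    (hα : α = 4⁻¹ * (3*(2*a - 4*b)*(1/c) + 4*c^3))
    (hβ : β = -2*c^3)
    (haA : aA = 3/2*(2*a-4*b)*((3:ℝ)/4-1)*(1/c^5) + 3*(1/c))
    (haB : aB = -3*(1/c)) (hbA : bA = -3*(1/c))
    (hEA : EA = 2*α*aA*a + α*α + 2*β*bA*b)
    (hEB : EB = 2*α*aB*a + β*β)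
    (hN : 0 < N) (hN2 : N^2 = α*α*a + β*β*b) :
    2*Real.sqrt 2/343*(c^2-2*s)/(a+b)
      ≤ 5*(N⁻¹*α) + 3*(N⁻¹*β) + 2*a*(aA/N - α*EA/(2*N^3))
        + 2*b*(-(β*EB/(2*N^3))) := by
  have hw2 : (Real.sqrt 2)^2 = 2 := Real.sq_sqrt (by norm_num)
  have hwpos : 0 < Real.sqrt 2 := Real.sqrt_pos.mpr (by norm_num)
  set w := Real.sqrt 2 with hwdef
  have ha' : a = c^4/2 := by linarith
  have hapos : 0 < a := by nlinarith [pow_pos hc 4]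
  have hs2c : 4*s^2 < c^4 := by nlinarith
  have hcs : 2*s < c^2 := by nlinarith [sq_nonneg (c^2 + 2*s), pow_pos hc 2]
  -- single-fraction form of the RHS
  have hR : 5*(N⁻¹*α) + 3*(N⁻¹*β) + 2*a*(aA/N - α*EA/(2*N^3)) + 2*b*(-(β*EB/(2*N^3)))
      = (2*(5*α+3*β+2*a*aA)*N^2 - (2*a*α*EA + 2*b*β*EB))/(2*N^3) := by
    field_simp
    ring
  have hnum : 2*(5*α+3*β+2*a*aA)*N^2 - (2*a*α*EA + 2*b*β*EB)
      = c*((c^4-4*s^2)*(49*c^8-288*c^4*s^2+432*s^4))/16 := by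
    rw [hN2, hEA, hEB, hα, hβ, haA, haB, hbA, ha', ← hs2]
    have hcne : c ≠ 0 := hc.ne'
    field_simp
    ring
  rw [hR, hnum]
  have hNc : 32*(c^2*N^2) = c^4*(49*c^8-40*c^4*s^2+144*s^4) := by
    rw [hN2, hα, hβ, ha', ← hs2]
    field_simp
    ring
  have h36 : (0:ℝ) ≤ 10*c^4 - 36*s^2 := by nlinarith
  have hNsq : N^2 ≤ 49*c^10/32 := by
    nlinarith [pow_pos hc 2, mul_nonneg (mul_nonneg (pow_nonneg hc.le 4) (sq_nonneg s)) h36, hNc]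
  have hwN : w^2*N^2 = 2*N^2 := by rw [hw2]
  have h4wN : 4*w*N ≤ 7*c^5 := by
    nlinarith [hNsq, hwN, hN, hwpos, pow_pos hc 5, mul_pos hwpos hN]
  have hNle : N ≤ 7*c^5/(4*w) := by
    rw [le_div_iff₀ (by positivity)]
    linarith
  have hN3 : N^3 ≤ 343*c^15/(128*w) := by
    have h1 := pow_le_pow_left₀ hN.le hNle 3
    have heq : (7*c^5/(4*w))^3 = 343*c^15/(128*w) := by
      rw [div_pow, show ((4*w)^3 : ℝ) = 128*w by linear_combination (64*w)*hw2,
        show ((7*c^5)^3 : ℝ) = 343*c^15 by ring]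
    linarith [heq ▸ h1]
  have hrw : c*((c^4-4*s^2)*(49*c^8-288*c^4*s^2+432*s^4))/16/(2*N^3)
      = c*((c^4-4*s^2)*(49*c^8-288*c^4*s^2+432*s^4))/(32*N^3) := by ring
  rw [hrw]
  rw [div_le_div_iff₀ (by linarith : (0:ℝ) < a + b) (by positivity : (0:ℝ) < 32*N^3)]
  have hge : (0:ℝ) ≤ c^2 - 2*s := by linarith
  have h4s : (0:ℝ) ≤ c^4 - 4*s^2 := by linarith
  have h68 : (0:ℝ) ≤ 24*c^8 + c^4*s^2 - 68*s^4 := by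
    nlinarith [mul_nonneg h4s (sq_nonneg s), mul_nonneg h4s (pow_nonneg hc.le 4)]
  calc 2*w/343*(c^2-2*s)*(32*N^3)
      ≤ 2*w/343*(c^2-2*s)*(32*(343*c^15/(128*w))) := by
        apply mul_le_mul_of_nonneg_left (by linarith) (by positivity)
    _ = (c^2-2*s)*c^15/2 := by
        field_simp
        ring
    _ ≤ (c^4-4*s^2)*c^13/2 := by
        nlinarith [mul_nonneg (mul_nonneg (pow_nonneg hc.le 13) hs) hge]
    _ ≤ c*((c^4-4*s^2)*(49*c^8-288*c^4*s^2+432*s^4))*(a+b) := by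
        rw [ha', ← hs2]
        nlinarith [mul_nonneg (mul_nonneg hc.le h4s) (mul_nonneg h4s h68),
          mul_nonneg (mul_nonneg hc.le h4s) (pow_nonneg hs 6)]


/-! #### the main theorem -/

set_option maxHeartbeats 1000000 in
/-- On `{u > v}`, the divergence of `g = ∇f₊/|∇f₊|` is at least
`(2√2/343)·(√u - √v)/|z|^2` (Section 3.4 of the paper, case `u > v`). -/
theorem stmt10 (z : EuclideanSpace ℝ (Fin (5 + 3))) (hz : vv z < uu z) :
    2 * Real.sqrt 2 / 343 * (Real.sqrt (uu z) - Real.sqrt (vv z)) / ‖z‖ ^ 2 ≤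
      divg (fun w => ‖gradient fp w‖⁻¹ • gradient fp w) z := by
  have hz' : 4 * Bf z < 2 * Af z := by rw [uu_eq, vv_eq] at hz; exact hz
  have hA : 0 < Af z := by have := Bf_nonneg z; linarith
  have h2Apos : (0:ℝ) < 2 * Af z := by linarith
  set c := (2 * Af z) ^ ((1:ℝ)/4) with hcdef
  have hcpos : 0 < c := Real.rpow_pos_of_pos h2Apos _
  have hc4 : c^4 = 2 * Af z := by
    rw [hcdef, ← Real.rpow_natCast ((2 * Af z) ^ ((1:ℝ)/4)) 4, ← Real.rpow_mul h2Apos.le]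
    norm_num
  have hr3 : (2 * Af z) ^ ((3:ℝ)/4) = c^3 := by
    rw [hcdef, ← Real.rpow_natCast ((2 * Af z) ^ ((1:ℝ)/4)) 3, ← Real.rpow_mul h2Apos.le]
    norm_num
  have hr1 : (2 * Af z) ^ ((3:ℝ)/4 - 1) = 1/c := by
    rw [hcdef, show (3:ℝ)/4 - 1 = -((1:ℝ)/4) by norm_num, Real.rpow_neg h2Apos.le]
    exact (one_div _).symm
  have hr5 : (2 * Af z) ^ ((3:ℝ)/4 - 1 - 1) = 1/c^5 := by
    rw [hcdef, show (3:ℝ)/4 - 1 - 1 = -((1:ℝ)/4 * 5) by norm_num, Real.rpow_neg h2Apos.le,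
      Real.rpow_mul h2Apos.le, show ((5:ℝ)) = ((5:ℕ):ℝ) by norm_num,
      Real.rpow_natCast ((2 * Af z) ^ ((1:ℝ)/4)) 5]
    exact (one_div _).symm
  set s := Real.sqrt (Bf z) with hsdef
  have hs : 0 ≤ s := Real.sqrt_nonneg _
  have hs2 : s^2 = Bf z := Real.sq_sqrt (Bf_nonneg z)
  have hsuu : Real.sqrt (uu z) = c^2 := by
    rw [uu_eq, ← hc4, show c^4 = (c^2)^2 by ring, Real.sqrt_sq (sq_nonneg c)]
  have hsvv : Real.sqrt (vv z) = 2*s := by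
    rw [vv_eq, show 4 * Bf z = (2*s)^2 by rw [mul_pow, hs2]; norm_num,
      Real.sqrt_sq (by positivity)]
  have hnz : ‖z‖^2 = Af z + Bf z := by
    rw [EuclideanSpace.norm_eq, Real.sq_sqrt (by positivity)]
    rw [Fin.sum_univ_add (f := fun i => ‖z i‖^2)]
    simp [Real.norm_eq_abs, sq_abs, Af, Bf]
  have hE : 0 < Ef z := Ef_pos z hA hz'
  have hN : 0 < Real.sqrt (Ef z) := Real.sqrt_pos.mpr hE
  rw [divg_val z hA hz', hsuu, hsvv, hnz]
  set N := Real.sqrt (Ef z) with hNdef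
  have hN2 : N^2 = alf z * alf z * Af z + bet z * bet z * Bf z := by
    rw [hNdef, Real.sq_sqrt hE.le, Ef]
  simp only [sg, tg, ← hNdef]
  exact endgame (Af z) (Bf z) c s N (alf z) (bet z) (aAc z) (aBc z) (bAc z) (EAc z) (EBc z)
    (Bf_nonneg z) (by linarith) hcpos hc4 hs hs2
    (by rw [alf, hr1, hr3]) (by rw [bet, hr3])
    (by rw [aAc, hr5, hr1]) (by rw [aBc, hr1]) (by rw [bAc, hr1])
    (by rw [EAc]) (by rw [EBc]) hN hN2
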